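/- liminf_{A→∞} #𝕃^loc(A) / #𝕃(A) > 0. -/

import Mathlib

open Filter MeasureTheory Finset Topology
open scoped ENNReal

noncomputable section

/-- Euclidean norm of an integer quadruple. -/
def znorm (a : Fin 4 → ℤ) : ℝ := Real.sqrt (∑ i, ((a i : ℝ)) ^ 2)

/-- Euclidean norm of a natural-number quadruple. -/
def pnorm (x : Fin 4 → ℕ) : ℝ := Real.sqrt (∑ i, ((x i : ℝ)) ^ 2)

/-- Sup-norm `|a| = maxᵢ |aᵢ|` of an integer quadruple. -/
def snorm (a : Fin 4 → ℤ) : ℕ := Finset.univ.sup fun i => (a i).natAbs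

/-- Min of the absolute values of the coordinates. -/
def minAbs (a : Fin 4 → ℤ) : ℕ := Finset.univ.inf' Finset.univ_nonempty fun i => (a i).natAbs

/-- `a` is primitive: all coordinates nonzero and gcd of the coordinates is 1. -/
def IsPrimitive (a : Fin 4 → ℤ) : Prop := (∀ i, a i ≠ 0) ∧ Finset.univ.gcd a = 1

/-- `a` is locally solvable: it is primitive, its coordinates are not all of the same
sign, and for every prime `p` the congruence `⟨a,x⟩ ≡ 0 (mod p)` has a solution in the
reduced residues mod `p`. -/
def IsLocSolv (a : Fin 4 → ℤ) : Prop :=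
  IsPrimitive a ∧ ¬ ((∀ i, 0 < a i) ∨ (∀ i, a i < 0)) ∧
  ∀ p : ℕ, p.Prime → ∃ x : Fin 4 → (ZMod p)ˣ,
    ∑ i, (a i : ZMod p) * ((x i : (ZMod p)ˣ) : ZMod p) = 0

/-- The set `L(a)` of quadruples of primes solving `⟨a,p⟩ = 0`. -/
def Lsol (a : Fin 4 → ℤ) : Set (Fin 4 → ℕ) :=
  {p | (∀ i, (p i).Prime) ∧ ∑ i, a i * (p i : ℤ) = 0}

/-- `𝔪(a)`: the minimum of `|p|` over prime solutions `p ∈ L(a)`, and `∞` if there is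
no solution. -/
def mfrak (a : Fin 4 → ℤ) : ℝ≥0∞ :=
  ⨅ p ∈ Lsol a, ((Finset.univ.sup p : ℕ) : ℝ≥0∞)

/-- The condition `𝔪(a)³ ≤ |a|·(log |a|)⁴·(log log |a|)`. -/
def SmallSol (a : Fin 4 → ℤ) : Prop :=
  (mfrak a) ^ 3 ≤ ENNReal.ofReal ((snorm a : ℝ) * (Real.log (snorm a)) ^ 4 *
    Real.log (Real.log (snorm a)))

/-- `𝕃^loc(A)`. -/
def LlocSet (A : ℝ) : Set (Fin 4 → ℤ) := {a | IsLocSolv a ∧ znorm a ≤ A}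

/-- `𝕃(A)`. -/
def LSet (A : ℝ) : Set (Fin 4 → ℤ) := {a | IsPrimitive a ∧ znorm a ≤ A}

/-- `𝒫(B)`: quadruples of primes of sup-norm at most `B`. -/
def PP (B : ℝ) : Set (Fin 4 → ℕ) := {x | ∀ i, (x i).Prime ∧ (x i : ℝ) ≤ B}

/-- The counting function `N_a(B)`. -/
def NB (a : Fin 4 → ℤ) (B : ℝ) : ℝ :=
  (Real.log B) ^ 4 * (Set.ncard {x | x ∈ PP B ∧ ∑ i, a i * (x i : ℤ) = 0} : ℝ)

/-- `w = log log B / log log log B`. -/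
def wB (B : ℝ) : ℝ := Real.log (Real.log B) / Real.log (Real.log (Real.log B))

/-- `W = ∏_{p ≤ w} p^(⌈log w/log p⌉ + 1)`. -/
def WB (B : ℝ) : ℕ :=
  ∏ p ∈ Finset.filter Nat.Prime (Finset.range (⌊wB B⌋₊ + 1)),
    p ^ (⌈Real.log (wB B) / Real.log (p : ℝ)⌉₊ + 1)

/-- `rad(W) = ∏_{p ≤ w} p`. -/
def radWB (B : ℝ) : ℕ :=
  ∏ p ∈ Finset.filter Nat.Prime (Finset.range (⌊wB B⌋₊ + 1)), p

/-- The local counting function `N_a^loc(B)`; the summation condition is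
`a ∈ Λ_x^(W) ∩ 𝒞_x^(α)` with `α = log B`. -/
def NlocB (a : Fin 4 → ℤ) (B : ℝ) : ℝ :=
  (Real.log B) ^ 4 * (Real.log B * (WB B : ℝ) / znorm a) *
    ∑ᶠ x ∈ {x : Fin 4 → ℕ | x ∈ PP B ∧ ((WB B : ℤ) ∣ ∑ i, a i * (x i : ℤ)) ∧
      |∑ i, (x i : ℝ) * (a i : ℝ)| ≤ pnorm x * znorm a / (2 * Real.log B)},
      1 / pnorm x

/-- Gram determinant `‖u‖²‖v‖² − ⟨u,v⟩²` of a pair of real vectors. -/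
def gram2 (u v : Fin 4 → ℝ) : ℝ :=
  (∑ i, u i ^ 2) * (∑ i, v i ^ 2) - (∑ i, u i * v i) ^ 2

/-- Determinant of a rank-2 lattice `S ⊆ ℤ⁴`: for such a lattice it is the minimum of
`det(ℤu ⊕ ℤv) = √(‖u‖²‖v‖² − ⟨u,v⟩²)` over linearly independent pairs `u, v ∈ S`
(the minimum being attained precisely at bases of `S`). -/
def latDet2 (S : Set (Fin 4 → ℤ)) : ℝ :=
  sInf {d : ℝ | ∃ u ∈ S, ∃ v ∈ S,
    (∀ m n : ℤ, m • u + n • v = 0 → m = 0 ∧ n = 0) ∧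
    d = Real.sqrt (gram2 (fun i => (u i : ℝ)) (fun i => (v i : ℝ)))}

/-- `det(Λ_x ∩ Λ_y)` for quadruples of primes `x, y`. -/
def detXY (x y : Fin 4 → ℕ) : ℝ :=
  latDet2 {z | (∑ i, (x i : ℤ) * z i) = 0 ∧ (∑ i, (y i : ℤ) * z i) = 0}

/-- `Ω(B)`: pairs of distinct quadruples of primes of size at most `B`. -/
def OmegaB (B : ℝ) : Set ((Fin 4 → ℕ) × (Fin 4 → ℕ)) :=
  {p | p.1 ∈ PP B ∧ p.2 ∈ PP B ∧ p.1 ≠ p.2}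

/-- `E(B)`. -/
def EB (B : ℝ) : ℝ :=
  (Real.log B) ^ 8 * ∑ᶠ p ∈ OmegaB B, 1 / detXY p.1 p.2

/-- `𝒢(x,y)`: the gcd of the 2×2 minors of the matrix with columns `x, y`. -/
def Gcal (x y : Fin 4 → ℕ) : ℤ :=
  Finset.univ.gcd fun q : Fin 4 × Fin 4 =>
    (x q.1 : ℤ) * (y q.2 : ℤ) - (x q.2 : ℤ) * (y q.1 : ℤ)

/-- `Δ(x,y) = ‖x‖‖y‖/det(ℤx ⊕ ℤy)`. -/
def DeltaXY (x y : Fin 4 → ℕ) : ℝ :=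
  pnorm x * pnorm y / Real.sqrt (gram2 (fun i => (x i : ℝ)) (fun i => (y i : ℝ)))

/-- `ℰ_{x,y}(B) = min{1, Δ(x,y)²/α²} + 𝟏[𝒢(x,y) ∤ W/rad(W)]`. -/
def EcalXY (x y : Fin 4 → ℕ) (B : ℝ) : ℝ :=
  min 1 (DeltaXY x y ^ 2 / (Real.log B) ^ 2) +
  (if Gcal x y ∣ ((WB B / radWB B : ℕ) : ℤ) then 0 else 1)

/-- `F(B)`. -/
def FB (B : ℝ) : ℝ :=
  (Real.log B) ^ 8 * ∑ᶠ p ∈ OmegaB B, EcalXY p.1 p.2 B / detXY p.1 p.2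

/-- `ζ(2)`. -/
def zeta2 : ℝ := ∑' n : ℕ, (1 : ℝ) / (n + 1) ^ 2

/-- `{a ∈ ℤ⁴_prim : ‖a‖ ≤ A}` with `ℤ⁴_prim` the tuples of coprime coordinates. -/
def primA (A : ℝ) : Set (Fin 4 → ℤ) := {a | Finset.univ.gcd a = 1 ∧ znorm a ≤ A}

/-- `D(A,B)`. -/
def DAB (A B : ℝ) : ℝ :=
  (∑ᶠ a ∈ primA A, NB a B ^ 2) - (Real.log B) ^ 4 * ∑ᶠ a ∈ primA A, NB a B

/-- `Δ_a^mix(B)`. -/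
def DeltaMix (a : Fin 4 → ℤ) (B : ℝ) : ℝ :=
  (Real.log B) ^ 8 * (Real.log B * (WB B : ℝ) / znorm a) *
    ∑ᶠ x ∈ {x : Fin 4 → ℕ | x ∈ PP B ∧ ∑ i, a i * (x i : ℤ) = 0}, 1 / pnorm x

/-- `Δ_a^loc(B)`. -/
def DeltaLoc (a : Fin 4 → ℤ) (B : ℝ) : ℝ :=
  (Real.log B) ^ 8 * ((Real.log B) ^ 2 * (WB B : ℝ) ^ 2 / znorm a ^ 2) *
    ∑ᶠ x ∈ {x : Fin 4 → ℕ | x ∈ PP B ∧ ((WB B : ℤ) ∣ ∑ i, a i * (x i : ℤ)) ∧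
      |∑ i, (x i : ℝ) * (a i : ℝ)| ≤ pnorm x * znorm a / (2 * Real.log B)},
      1 / pnorm x ^ 2

/-- `D^mix(A,B)`. -/
def DmixAB (A B : ℝ) : ℝ :=
  (∑ᶠ a ∈ primA A, NB a B * NlocB a B) - ∑ᶠ a ∈ primA A, DeltaMix a B

/-- `D^loc(A,B)`. -/
def DlocAB (A B : ℝ) : ℝ :=
  (∑ᶠ a ∈ primA A, NlocB a B ^ 2) - ∑ᶠ a ∈ primA A, DeltaLoc a B

/-- `K(A,B)`. -/
def KAB (A B : ℝ) : ℝ :=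
  ∑ᶠ a ∈ primA A, ((Real.log B) ^ 4 * NB a B + DeltaMix a B + DeltaLoc a B)

/-- `τ(a,γ) = γ·vol({u ∈ 𝓑₄(1) ∩ ℝ⁴₊ : a ∈ 𝒞_u^(γ)})`. -/
def tauA (a : Fin 4 → ℤ) (γ : ℝ) : ℝ :=
  γ * (volume {u : Fin 4 → ℝ | Real.sqrt (∑ i, u i ^ 2) < 1 ∧ (∀ i, 0 < u i) ∧
      |∑ i, u i * (a i : ℝ)| ≤ Real.sqrt (∑ i, u i ^ 2) * znorm a / (2 * γ)}).toReal

/-- The singular integral `𝔍_a(B) = τ(a, log B)`. -/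
def Jfrak (a : Fin 4 → ℤ) (B : ℝ) : ℝ := tauA a (Real.log B)

/-- `σ(a,Q) = (Q/φ(Q)⁴)·#{b ∈ ((ℤ/Qℤ)^*)⁴ : ⟨a,b⟩ ≡ 0 mod Q}`. -/
def sigmaA (a : Fin 4 → ℤ) (Q : ℕ) : ℝ :=
  (Q : ℝ) / (Nat.totient Q : ℝ) ^ 4 *
    (Nat.card {b : Fin 4 → (ZMod Q)ˣ |
      ∑ i, (a i : ZMod Q) * ((b i : (ZMod Q)ˣ) : ZMod Q) = 0} : ℝ)

/-- The truncated singular series `𝔖_a(B) = σ(a, W)`. -/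
def Sfrak (a : Fin 4 → ℤ) (B : ℝ) : ℝ := sigmaA a (WB B)

end


section Aux

open Finset

/-! ### Auxiliary lemmas for local solvability -/

lemma two_units_aux (p : ℕ) [Fact p.Prime] (hp : p ≠ 2) (u v t : ZMod p)
    (hu : u ≠ 0) (hv : v ≠ 0) : ∃ x y : (ZMod p)ˣ, u * x + v * y = t := by
  have hcard : 3 ≤ Fintype.card (ZMod p) := by
    rw [ZMod.card]; have := (Fact.out : p.Prime).two_le; omega
  obtain ⟨y, hy⟩ : ∃ y : ZMod p, y ∉ ({0, v⁻¹ * t} : Finset (ZMod p)) := by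
    have h1 : (({0, v⁻¹ * t} : Finset (ZMod p)))ᶜ.Nonempty := by
      rw [← Finset.card_pos, Finset.card_compl]
      have : ({0, v⁻¹ * t} : Finset (ZMod p)).card ≤ 2 :=
        Finset.card_insert_le _ _ |>.trans (by simp)
      omega
    obtain ⟨y, hy⟩ := h1
    exact ⟨y, by simpa using hy⟩
  simp only [Finset.mem_insert, Finset.mem_singleton, not_or] at hy
  obtain ⟨hy0, hyt⟩ := hy
  have hvy : v * y ≠ t := fun h => hyt (by field_simp [hv]; rw [mul_comm]; exact h)
  have hx0 : (t - v * y) * u⁻¹ ≠ 0 :=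
    mul_ne_zero (sub_ne_zero.mpr (Ne.symm hvy)) (inv_ne_zero hu)
  refine ⟨Units.mk0 _ hx0, Units.mk0 y hy0, ?_⟩
  simp only [Units.val_mk0]
  field_simp
  ring

lemma gcd_one_aux (a b c d : ℤ) (hab : Int.gcd a b = 1) :
    Finset.univ.gcd ![a, b, c, -d] = 1 := by
  set g := Finset.univ.gcd ![a, b, c, -d] with hg
  have h1 : g ∣ a := by
    have := Finset.gcd_dvd (Finset.mem_univ (0 : Fin 4)) (f := ![a, b, c, -d])
    simpa using this
  have h2 : g ∣ b := by
    have := Finset.gcd_dvd (Finset.mem_univ (1 : Fin 4)) (f := ![a, b, c, -d])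
    simpa using this
  have h3 : g ∣ (1 : ℤ) := by
    have := Int.dvd_coe_gcd h1 h2
    rw [hab] at this; exact_mod_cast this
  have h4 := Int.isUnit_iff.mp (isUnit_of_dvd_one h3)
  have h5 : normalize g = g := Finset.normalize_gcd
  rcases h4 with h | h
  · exact h
  · exfalso; rw [h, normalize_eq_one.mpr isUnit_one.neg] at h5; norm_num at h5

lemma odd_prime_case_aux (a b c d : ℤ) (hab : Int.gcd a b = 1) (hcd : Int.gcd c d = 1)
    (p : ℕ) (hp : p.Prime) (hp2 : p ≠ 2) :
    ∃ x : Fin 4 → (ZMod p)ˣ,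
      ∑ i, ((![a, b, c, -d]) i : ZMod p) * ((x i : (ZMod p)ˣ) : ZMod p) = 0 := by
  haveI : Fact p.Prime := ⟨hp⟩
  have key : ∀ m n : ℤ, Int.gcd m n = 1 → ((m : ZMod p) ≠ 0 ∨ (n : ZMod p) ≠ 0) := by
    intro m n hmn
    by_contra h
    push_neg at h
    have h1 : (p : ℤ) ∣ m := (ZMod.intCast_zmod_eq_zero_iff_dvd m p).mp h.1
    have h2 : (p : ℤ) ∣ n := (ZMod.intCast_zmod_eq_zero_iff_dvd n p).mp h.2
    have := Int.dvd_coe_gcd h1 h2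
    rw [hmn] at this
    exact hp.one_lt.ne' (by exact_mod_cast Int.eq_one_of_dvd_one (by positivity) this)
  rcases key a b hab with h1 | h1 <;> rcases key c d hcd with h2 | h2
  · obtain ⟨x, y, hxy⟩ := two_units_aux p hp2 (a : ZMod p) (c : ZMod p)
      (-((b : ZMod p) + (-(d : ZMod p)))) h1 h2
    exact ⟨![x, 1, y, 1], by
      simp only [Fin.sum_univ_four, Matrix.cons_val_zero, Matrix.cons_val_one,
        Matrix.head_cons, Matrix.cons_val_two, Matrix.tail_cons, Matrix.cons_val_three,
        Units.val_one, Int.cast_neg, mul_one]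
      linear_combination hxy⟩
  · obtain ⟨x, y, hxy⟩ := two_units_aux p hp2 (a : ZMod p) (-(d : ZMod p))
      (-((b : ZMod p) + (c : ZMod p))) h1 (by simpa using h2)
    exact ⟨![x, 1, 1, y], by
      simp only [Fin.sum_univ_four, Matrix.cons_val_zero, Matrix.cons_val_one,
        Matrix.head_cons, Matrix.cons_val_two, Matrix.tail_cons, Matrix.cons_val_three,
        Units.val_one, Int.cast_neg, mul_one]
      linear_combination hxy⟩
  · obtain ⟨x, y, hxy⟩ := two_units_aux p hp2 (b : ZMod p) (c : ZMod p)
      (-((a : ZMod p) + (-(d : ZMod p)))) h1 h2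
    exact ⟨![1, x, y, 1], by
      simp only [Fin.sum_univ_four, Matrix.cons_val_zero, Matrix.cons_val_one,
        Matrix.head_cons, Matrix.cons_val_two, Matrix.tail_cons, Matrix.cons_val_three,
        Units.val_one, Int.cast_neg, mul_one]
      linear_combination hxy⟩
  · obtain ⟨x, y, hxy⟩ := two_units_aux p hp2 (b : ZMod p) (-(d : ZMod p))
      (-((a : ZMod p) + (c : ZMod p))) h1 (by simpa using h2)
    exact ⟨![1, x, 1, y], by
      simp only [Fin.sum_univ_four, Matrix.cons_val_zero, Matrix.cons_val_one,
        Matrix.head_cons, Matrix.cons_val_two, Matrix.tail_cons, Matrix.cons_val_three,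
        Units.val_one, Int.cast_neg, mul_one]
      linear_combination hxy⟩

lemma two_case_aux (a b c d : ℤ) (ha : Odd a) (hb : Odd b) (hc : Odd c) (hd : Odd d) :
    ∃ x : Fin 4 → (ZMod 2)ˣ,
      ∑ i, ((![a, b, c, -d]) i : ZMod 2) * ((x i : (ZMod 2)ˣ) : ZMod 2) = 0 := by
  have cast_one : ∀ z : ℤ, Odd z → (z : ZMod 2) = 1 := by
    intro z hz
    have h0 : (z : ZMod 2) ≠ 0 := by
      rw [Ne, ZMod.intCast_zmod_eq_zero_iff_dvd]
      rintro ⟨k, rfl⟩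
      exact (Int.not_odd_iff_even.mpr ⟨k, by ring⟩) hz
    have htwo : ∀ x : ZMod 2, x ≠ 0 → x = 1 := by decide
    exact htwo _ h0
  refine ⟨fun _ => 1, ?_⟩
  simp only [Fin.sum_univ_four, Matrix.cons_val_zero, Matrix.cons_val_one,
    Matrix.head_cons, Matrix.cons_val_two, Matrix.tail_cons, Matrix.cons_val_three,
    Units.val_one, mul_one, Int.cast_neg]
  rw [cast_one a ha, cast_one b hb, cast_one c hc, cast_one d hd]
  decide

lemma isLocSolv_mk_aux (a b c d : ℤ) (ha : Odd a) (hb : Odd b) (hc : Odd c) (hd : Odd d)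
    (hpa : 0 < a) (hpd : 0 < d)
    (hab : Int.gcd a b = 1) (hcd : Int.gcd c d = 1) :
    IsLocSolv ![a, b, c, -d] := by
  have hodd : ∀ z : ℤ, Odd z → z ≠ 0 := fun z hz h0 => by simp [h0] at hz
  refine ⟨⟨?_, gcd_one_aux a b c d hab⟩, ?_, ?_⟩
  · intro i; fin_cases i <;> simp [hodd a ha, hodd b hb, hodd c hc, hodd d hd]
  · rintro (h | h)
    · have := h 3; simp at this; omega
    · have := h 0; simp at this; omega
  · intro p hp
    rcases eq_or_ne p 2 with rfl | hp2
    · exact two_case_aux a b c d ha hb hc hd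
    · exact odd_prime_case_aux a b c d hab hcd p hp hp2

/-! ### Counting lemmas -/

def Ofin (N : ℕ) : Finset ℕ := (Finset.Icc 1 N).filter (fun n => Odd n)

def Gfin (N : ℕ) : Finset (ℕ × ℕ) := (Ofin N ×ˢ Ofin N).filter (fun q => Nat.gcd q.1 q.2 = 1)

lemma Ofin_card_lb (N : ℕ) : (N : ℝ) / 2 ≤ ((Ofin N).card : ℝ) := by
  have h : (N + 1) / 2 ≤ (Ofin N).card := by
    rw [show (N+1)/2 = (Finset.range ((N+1)/2)).card from (Finset.card_range _).symm]
    apply Finset.card_le_card_of_injOn (fun k => 2 * k + 1)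
    · intro k hk
      simp only [Finset.mem_coe, Finset.mem_range] at hk
      simp only [Finset.mem_coe, Ofin, Finset.mem_filter, Finset.mem_Icc]
      exact ⟨⟨by omega, by omega⟩, ⟨k, by ring⟩⟩
    · intro x _ y _ h
      simp only at h
      omega
  have h2 : (N : ℝ) / 2 ≤ (((N + 1) / 2 : ℕ) : ℝ) := by
    have h3 : N ≤ 2 * ((N + 1) / 2) := by omega
    have := (Nat.cast_le (α := ℝ)).mpr h3
    push_cast at this ⊢
    linarith
  calc (N : ℝ) / 2 ≤ (((N + 1) / 2 : ℕ) : ℝ) := h2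
    _ ≤ _ := by exact_mod_cast h

lemma odd_count_ub (K : ℕ) : ((Finset.Icc 1 K).filter (fun n => Odd n)).card ≤ (K + 1) / 2 := by
  rw [show (K+1)/2 = (Finset.range ((K+1)/2)).card from (Finset.card_range _).symm]
  apply Finset.card_le_card_of_injOn (fun m => m / 2)
  · intro m hm
    simp only [Finset.mem_coe, Finset.mem_filter, Finset.mem_Icc] at hm
    obtain ⟨⟨h1, h2⟩, k, hk⟩ := hm
    simp only [Finset.mem_coe, Finset.mem_range]
    omega
  · intro x hx y hy h
    simp only [Finset.mem_coe, Finset.mem_filter, Finset.mem_Icc] at hx hy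
    obtain ⟨-, kx, hkx⟩ := hx
    obtain ⟨-, ky, hky⟩ := hy
    simp only at h
    omega

lemma Mg_card_ub (N g : ℕ) (hg : 3 ≤ g) :
    ((Ofin N).filter (fun m => g ∣ m)).card ≤ (N / g + 1) / 2 := by
  calc ((Ofin N).filter (fun m => g ∣ m)).card
      ≤ ((Finset.Icc 1 (N / g)).filter (fun n => Odd n)).card := by
        apply Finset.card_le_card_of_injOn (fun m => m / g)
        · intro m hm
          simp only [Finset.mem_coe, Ofin, Finset.mem_filter, Finset.mem_Icc] at hm
          obtain ⟨⟨⟨h1, h2⟩, hodd⟩, hdvd⟩ := hm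
          simp only [Finset.mem_coe, Finset.mem_filter, Finset.mem_Icc]
          have hmul : g * (m / g) = m := Nat.mul_div_cancel' hdvd
          refine ⟨⟨?_, Nat.div_le_div_right h2⟩, ?_⟩
          · have := Nat.le_of_dvd (by omega) hdvd
            exact (Nat.one_le_div_iff (by omega)).mpr this
          · rcases Nat.even_or_odd (m / g) with he | ho
            · exfalso
              have : Even m := by
                rw [← hmul]; exact he.mul_left g
              exact (Nat.not_odd_iff_even.mpr this) hodd
            · exact ho
        · intro x hx y hy h
          simp only [Finset.mem_coe, Finset.mem_filter] at hx hy
          have hx' : g * (x / g) = x := Nat.mul_div_cancel' hx.2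
          have hy' : g * (y / g) = y := Nat.mul_div_cancel' hy.2
          simp only at h
          rw [← hx', ← hy', h]
    _ ≤ (N / g + 1) / 2 := odd_count_ub _

lemma odd_of_dvd_aux {g x : ℕ} (h : g ∣ x) (hx : Odd x) : Odd g := by
  rcases Nat.even_or_odd g with he | ho
  · exfalso
    obtain ⟨c, rfl⟩ := h
    exact Nat.not_odd_iff_even.mpr (he.mul_right c) hx
  · exact ho

lemma bad_subset_aux (N : ℕ) :
    (Ofin N ×ˢ Ofin N).filter (fun q => Nat.gcd q.1 q.2 ≠ 1) ⊆
      (Finset.Icc 3 N).biUnion (fun g =>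
        ((Ofin N).filter (fun m => g ∣ m)) ×ˢ ((Ofin N).filter (fun m => g ∣ m))) := by
  rintro ⟨x, y⟩ hxy
  simp only [Finset.mem_filter, Finset.mem_product] at hxy
  obtain ⟨⟨hx, hy⟩, hg⟩ := hxy
  have hxmem := hx; have hymem := hy
  simp only [Ofin, Finset.mem_filter, Finset.mem_Icc] at hxmem hymem
  set g := Nat.gcd x y with hgdef
  have hgx : g ∣ x := Nat.gcd_dvd_left x y
  have hgy : g ∣ y := Nat.gcd_dvd_right x y
  have hgodd : Odd g := odd_of_dvd_aux hgx hxmem.2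
  have hgle : g ≤ N := le_trans (Nat.le_of_dvd (by omega) hgx) hxmem.1.2
  have hg3 : 3 ≤ g := by
    rcases hgodd with ⟨k, hk⟩
    have : g ≠ 1 := hg
    omega
  simp only [Finset.mem_biUnion, Finset.mem_Icc, Finset.mem_product, Finset.mem_filter]
  exact ⟨g, ⟨hg3, hgle⟩, ⟨hx, hgx⟩, ⟨hy, hgy⟩⟩

lemma sum_inv_sq_le' (N : ℕ) (hN : 2 ≤ N) :
    ∑ g ∈ Finset.Icc 3 N, (1 : ℝ) / (g : ℝ) ^ 2 ≤ 1 / 2 - 1 / N := by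
  induction N, hN using Nat.le_induction with
  | base => simp
  | succ n hn ih =>
    rw [← Finset.insert_Icc_right_eq_Icc_add_one (by omega), Finset.sum_insert (by simp)]
    have h1 : (0:ℝ) < n := by exact_mod_cast (by omega : 0 < n)
    have h2 : (0:ℝ) < (n:ℝ) + 1 := by positivity
    have key : (1:ℝ) / ((n:ℝ)+1)^2 + (1/2 - 1/n) ≤ 1/2 - 1/((n:ℝ)+1) := by
      have e : (1:ℝ)/n - 1/((n:ℝ)+1) = 1/((n:ℝ)*((n:ℝ)+1)) := by field_simp; ring
      have e2 : (1:ℝ) / ((n:ℝ)+1)^2 ≤ 1/((n:ℝ)*((n:ℝ)+1)) := by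
        apply one_div_le_one_div_of_le (by positivity)
        nlinarith
      linarith
    push_cast
    linarith [key, ih]

lemma sum_inv_sq_le (N : ℕ) : ∑ g ∈ Finset.Icc 3 N, (1 : ℝ) / (g : ℝ) ^ 2 ≤ 1 / 2 := by
  rcases le_or_gt N 1 with h | h
  · rw [Finset.Icc_eq_empty (by omega)]; norm_num
  · have hN : (0:ℝ) < N := by exact_mod_cast (by omega : 0 < N)
    linarith [sum_inv_sq_le' N h, div_pos one_pos hN]

lemma sum_inv_le (N : ℕ) : ∑ g ∈ Finset.Icc 3 N, (1 : ℝ) / (g : ℝ) ≤ 2 * Real.sqrt N := by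
  induction N with
  | zero => simp
  | succ n ih =>
    rcases le_or_gt (n + 1) 2 with h | h
    · rw [Finset.Icc_eq_empty (by omega)]
      positivity
    · rw [← Finset.insert_Icc_right_eq_Icc_add_one (by omega), Finset.sum_insert (by simp)]
      have h1 : (0:ℝ) ≤ n := by positivity
      have e1 : Real.sqrt ((n:ℝ)+1) ^ 2 = (n:ℝ)+1 := Real.sq_sqrt (by linarith)
      have e2 : Real.sqrt (n:ℝ) ^ 2 = (n:ℝ) := Real.sq_sqrt h1
      have sn1 : (0:ℝ) ≤ Real.sqrt ((n:ℝ)+1) := Real.sqrt_nonneg _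
      have sn2 : (0:ℝ) ≤ Real.sqrt (n:ℝ) := Real.sqrt_nonneg _
      have hmul : (Real.sqrt ((n:ℝ)+1) - Real.sqrt n) * (Real.sqrt ((n:ℝ)+1) + Real.sqrt n) = 1 := by
        nlinarith
      have b1 : Real.sqrt ((n:ℝ)+1) ≤ (n:ℝ)+1 := by nlinarith
      have b2 : Real.sqrt (n:ℝ) ≤ (n:ℝ)+1 := by nlinarith
      have hd : 0 < Real.sqrt ((n:ℝ)+1) - Real.sqrt n := by
        have hs : 0 < Real.sqrt ((n:ℝ)+1) + Real.sqrt n := by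
          nlinarith [Real.sqrt_pos.mpr (show (0:ℝ) < (n:ℝ)+1 by linarith)]
        nlinarith
      have hkey : (1:ℝ)/((n:ℝ)+1) ≤ 2 * (Real.sqrt ((n:ℝ)+1) - Real.sqrt n) := by
        rw [div_le_iff₀ (by positivity)]
        nlinarith [mul_nonneg hd.le
          (by linarith : (0:ℝ) ≤ 2*((n:ℝ)+1) - (Real.sqrt ((n:ℝ)+1) + Real.sqrt n))]
      push_cast
      linarith [ih, hkey]

lemma Gfin_card_lb (N : ℕ) (hN : 10000 ≤ N) : (N:ℝ)^2/10 ≤ ((Gfin N).card : ℝ) := by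
  set O := Ofin N
  set B := (O ×ˢ O).filter (fun q => Nat.gcd q.1 q.2 ≠ 1) with hB
  have hsplit : (Gfin N).card + B.card = (O ×ˢ O).card := by
    rw [Gfin, hB]
    exact Finset.card_filter_add_card_filter_not _
  have hprod : (O ×ˢ O).card = O.card * O.card := by
    rw [Finset.card_product]
  have hBbound : (B.card : ℝ) ≤ (N:ℝ)^2/8 + (N:ℝ) * Real.sqrt N + (N:ℝ)/4 := by
    have h1 : B.card ≤ ∑ g ∈ Finset.Icc 3 N,
        (((O.filter (fun m => g ∣ m)) ×ˢ (O.filter (fun m => g ∣ m))).card) :=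
      le_trans (Finset.card_le_card (bad_subset_aux N)) (Finset.card_biUnion_le)
    have h2 : (B.card : ℝ) ≤ ∑ g ∈ Finset.Icc 3 N,
        ((O.filter (fun m => g ∣ m)).card : ℝ)^2 := by
      refine le_trans (show (B.card:ℝ) ≤ (((∑ g ∈ Finset.Icc 3 N,
        (((O.filter (fun m => g ∣ m)) ×ˢ (O.filter (fun m => g ∣ m))).card)) : ℕ) : ℝ)
        from by exact_mod_cast h1) ?_
      rw [Nat.cast_sum]
      refine le_of_eq (Finset.sum_congr rfl fun g _ => ?_)
      rw [Finset.card_product]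
      push_cast
      ring
    have h3 : ∀ g ∈ Finset.Icc 3 N, ((O.filter (fun m => g ∣ m)).card : ℝ)^2 ≤
        (N:ℝ)^2/4 * (1/(g:ℝ)^2) + (N:ℝ)/2 * (1/(g:ℝ)) + 1/4 := by
      intro g hg
      simp only [Finset.mem_Icc] at hg
      have hg0 : (0:ℝ) < g := by exact_mod_cast (by omega : 0 < g)
      have hc : ((O.filter (fun m => g ∣ m)).card : ℝ) ≤ ((N:ℝ)/(g:ℝ) + 1)/2 := by
        calc ((O.filter (fun m => g ∣ m)).card : ℝ)
            ≤ (((N / g + 1) / 2 : ℕ) : ℝ) := by exact_mod_cast Mg_card_ub N g hg.1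
          _ ≤ (((N / g + 1 : ℕ) : ℝ)) / 2 := Nat.cast_div_le
          _ ≤ ((N:ℝ)/(g:ℝ) + 1)/2 := by
              have := Nat.cast_div_le (m := N) (n := g) (α := ℝ)
              push_cast
              linarith
      have hnn : (0:ℝ) ≤ ((O.filter (fun m => g ∣ m)).card : ℝ) := by positivity
      calc ((O.filter (fun m => g ∣ m)).card : ℝ)^2 ≤ (((N:ℝ)/(g:ℝ) + 1)/2)^2 := by nlinarith
        _ = (N:ℝ)^2/4 * (1/(g:ℝ)^2) + (N:ℝ)/2 * (1/(g:ℝ)) + 1/4 := by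
            field_simp
            ring
    have h4 : (B.card : ℝ) ≤ ∑ g ∈ Finset.Icc 3 N,
        ((N:ℝ)^2/4 * (1/(g:ℝ)^2) + (N:ℝ)/2 * (1/(g:ℝ)) + 1/4) :=
      h2.trans (Finset.sum_le_sum h3)
    have h5 : ∑ g ∈ Finset.Icc 3 N, ((N:ℝ)^2/4 * (1/(g:ℝ)^2) + (N:ℝ)/2 * (1/(g:ℝ)) + 1/4)
        = (N:ℝ)^2/4 * (∑ g ∈ Finset.Icc 3 N, 1/(g:ℝ)^2)
          + (N:ℝ)/2 * (∑ g ∈ Finset.Icc 3 N, 1/(g:ℝ))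
          + ((Finset.Icc 3 N).card : ℝ)/4 := by
      rw [Finset.sum_add_distrib, Finset.sum_add_distrib, ← Finset.mul_sum, ← Finset.mul_sum,
        Finset.sum_const, nsmul_eq_mul]
      ring
    have hcard : ((Finset.Icc 3 N).card : ℝ) ≤ N := by
      rw [Nat.card_Icc]
      exact_mod_cast (by omega : N + 1 - 3 ≤ N)
    calc (B.card : ℝ) ≤ _ := h4
      _ = _ := h5
      _ ≤ (N:ℝ)^2/4 * (1/2) + (N:ℝ)/2 * (2*Real.sqrt N) + (N:ℝ)/4 := by
          have s1 := sum_inv_sq_le N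
          have s2 := sum_inv_le N
          have p1 : (0:ℝ) ≤ (N:ℝ)^2/4 := by positivity
          have p2 : (0:ℝ) ≤ (N:ℝ)/2 := by positivity
          nlinarith
      _ = (N:ℝ)^2/8 + (N:ℝ) * Real.sqrt N + (N:ℝ)/4 := by ring
  have hO : (N:ℝ)/2 ≤ (O.card : ℝ) := Ofin_card_lb N
  have hG : ((Gfin N).card : ℝ) = (O.card : ℝ)^2 - (B.card : ℝ) := by
    have h6 : ((Gfin N).card : ℝ) + B.card = (O.card : ℝ) * O.card := by
      exact_mod_cast hsplit.trans hprod
    nlinarith [h6]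
  have hsqrt : Real.sqrt N ≤ (N:ℝ)/100 := by
    have h100 : (100:ℝ) ≤ Real.sqrt N := by
      rw [show (100:ℝ) = Real.sqrt (100^2) by rw [Real.sqrt_sq]; norm_num]
      apply Real.sqrt_le_sqrt
      exact_mod_cast (by omega : 100^2 ≤ N)
    have e1 : Real.sqrt (N:ℝ) ^ 2 = (N:ℝ) := Real.sq_sqrt (by positivity)
    nlinarith
  have hNbig : (10000:ℝ) ≤ N := by exact_mod_cast hN
  rw [hG]
  nlinarith [hBbound, hO, hsqrt, sq_nonneg ((O.card : ℝ) - (N:ℝ)/2)]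

section Aux2

lemma znorm_coord (a : Fin 4 → ℤ) (i : Fin 4) : |((a i : ℝ))| ≤ znorm a := by
  rw [znorm, ← Real.sqrt_sq_eq_abs]
  apply Real.sqrt_le_sqrt
  exact Finset.single_le_sum (f := fun j => ((a j : ℝ))^2) (fun j _ => by positivity)
    (Finset.mem_univ i)

noncomputable def boxFinset (M : ℕ) : Finset (Fin 4 → ℤ) :=
  Fintype.piFinset (fun _ : Fin 4 => Finset.Icc (-(M:ℤ)) (M:ℤ))

lemma LSet_subset_box (A : ℝ) : LSet A ⊆ ↑(boxFinset ⌊A⌋₊) := by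
  intro a ha
  obtain ⟨-, hA⟩ := ha
  have hA0 : 0 ≤ A := le_trans (Real.sqrt_nonneg _) hA
  simp only [boxFinset, Finset.coe_sort_coe, Finset.mem_coe, Fintype.mem_piFinset,
    Finset.mem_Icc]
  intro i
  have h := (znorm_coord a i).trans hA
  have : (a i).natAbs ≤ ⌊A⌋₊ := by
    apply Nat.le_floor
    calc ((a i).natAbs : ℝ) = |((a i : ℝ))| := by
          simp [Nat.cast_natAbs, Int.cast_abs]
      _ ≤ A := h
  omega

lemma LSet_finite (A : ℝ) : (LSet A).Finite :=
  Set.Finite.subset (boxFinset ⌊A⌋₊).finite_toSet (LSet_subset_box A)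

lemma LlocSet_subset (A : ℝ) : LlocSet A ⊆ LSet A := fun a ha => ⟨ha.1.1, ha.2⟩

lemma box_card (M : ℕ) : (boxFinset M).card = (2 * M + 1)^4 := by
  rw [boxFinset, Fintype.card_piFinset]
  simp only [Int.card_Icc]
  rw [Finset.prod_const]
  congr 1
  omega

def Phi (q : (ℕ × ℕ) × (ℕ × ℕ)) : Fin 4 → ℤ :=
  ![(q.1.1 : ℤ), (q.1.2 : ℤ), (q.2.1 : ℤ), -(q.2.2 : ℤ)]

lemma Phi_mem (A : ℝ) (hA : 0 ≤ A) (q : (ℕ × ℕ) × (ℕ × ℕ))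
    (hq : q ∈ Gfin ⌊A/2⌋₊ ×ˢ Gfin ⌊A/2⌋₊) : Phi q ∈ LlocSet A := by
  set N := ⌊A/2⌋₊
  obtain ⟨⟨a, b⟩, ⟨c, d⟩⟩ := q
  simp only [Gfin, Ofin, Finset.mem_product, Finset.mem_filter, Finset.mem_Icc] at hq
  obtain ⟨⟨⟨⟨⟨ha1, haN⟩, haodd⟩, ⟨⟨hb1, hbN⟩, hbodd⟩⟩, hab⟩,
    ⟨⟨⟨⟨hc1, hcN⟩, hcodd⟩, ⟨⟨hd1, hdN⟩, hdodd⟩⟩, hcd⟩⟩ := hq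
  constructor
  · apply isLocSolv_mk_aux
    · exact_mod_cast haodd
    · exact_mod_cast hbodd
    · exact_mod_cast hcodd
    · exact_mod_cast hdodd
    · exact_mod_cast ha1
    · exact_mod_cast hd1
    · rw [Int.gcd_natCast_natCast]; exact hab
    · rw [Int.gcd_natCast_natCast]; exact hcd
  · -- znorm bound
    have hNA : (N : ℝ) ≤ A / 2 := Nat.floor_le (by positivity)
    have hbound : ∀ x : ℕ, x ≤ N → ((x:ℝ))^2 ≤ (N:ℝ)^2 := by
      intro x hx
      have : (x:ℝ) ≤ N := by exact_mod_cast hx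
      nlinarith [Nat.cast_nonneg (α := ℝ) x]
    rw [znorm, Phi]
    rw [show Real.sqrt (∑ i, ((((![(a : ℤ), (b:ℤ), (c:ℤ), -(d:ℤ)] : Fin 4 → ℤ) i : ℤ)) : ℝ)^2)
      = Real.sqrt ((a:ℝ)^2 + (b:ℝ)^2 + (c:ℝ)^2 + (d:ℝ)^2) from by
        congr 1
        simp [Fin.sum_univ_four]]
    calc Real.sqrt ((a:ℝ)^2 + (b:ℝ)^2 + (c:ℝ)^2 + (d:ℝ)^2)
        ≤ Real.sqrt ((2*(N:ℝ))^2) := by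
          apply Real.sqrt_le_sqrt
          have := hbound a haN; have := hbound b hbN
          have := hbound c hcN; have := hbound d hdN
          nlinarith [Nat.cast_nonneg (α := ℝ) N]
      _ = 2*(N:ℝ) := Real.sqrt_sq (by positivity)
      _ ≤ A := by linarith

lemma Phi_injOn (S : Set ((ℕ × ℕ) × (ℕ × ℕ))) : Set.InjOn Phi S := by
  rintro ⟨⟨a, b⟩, ⟨c, d⟩⟩ - ⟨⟨a', b'⟩, ⟨c', d'⟩⟩ - h
  have h0 := congrFun h 0
  have h1 := congrFun h 1
  have h2 := congrFun h 2
  have h3 := congrFun h 3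
  simp only [Phi, Matrix.cons_val_zero, Matrix.cons_val_one, Matrix.head_cons,
    Matrix.cons_val_two, Matrix.tail_cons, Matrix.cons_val_three, neg_inj,
    Nat.cast_inj] at h0 h1 h2 h3
  simp_all

lemma main_lb (A : ℝ) (hA : 30000 ≤ A) :
    1/1000000 ≤ (Set.ncard (LlocSet A) : ℝ) / (Set.ncard (LSet A) : ℝ) := by
  have hA0 : (0:ℝ) ≤ A := by linarith
  set N := ⌊A/2⌋₊ with hNdef
  have hN : 10000 ≤ N := by
    apply Nat.le_floor
    push_cast
    linarith
  set T := Gfin N ×ˢ Gfin N with hT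
  have hTcard : (T.card : ℝ) = ((Gfin N).card : ℝ)^2 := by
    rw [hT, Finset.card_product]; push_cast; ring
  have hG := Gfin_card_lb N hN
  have hNR : (10000:ℝ) ≤ (N:ℝ) := by exact_mod_cast hN
  -- lower bound on LlocSet
  have hsub : ↑(T.image Phi) ⊆ LlocSet A := by
    intro x hx
    simp only [Finset.coe_image, Set.mem_image, Finset.mem_coe] at hx
    obtain ⟨q, hq, rfl⟩ := hx
    exact Phi_mem A hA0 q hq
  have hfinL : (LSet A).Finite := LSet_finite A
  have hfinLoc : (LlocSet A).Finite := hfinL.subset (LlocSet_subset A)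
  have himgcard : (T.image Phi).card = T.card :=
    Finset.card_image_of_injOn (Phi_injOn _)
  have hLloc_lb : (T.card : ℝ) ≤ (Set.ncard (LlocSet A) : ℝ) := by
    have := Set.ncard_le_ncard hsub hfinLoc
    rw [Set.ncard_coe_finset, himgcard] at this
    exact_mod_cast this
  -- upper bound on LSet
  have hL_ub : (Set.ncard (LSet A) : ℝ) ≤ (3*A)^4 := by
    have h1 := Set.ncard_le_ncard (LSet_subset_box A) (boxFinset ⌊A⌋₊).finite_toSet
    rw [Set.ncard_coe_finset, box_card] at h1
    have h2 : ((2 * ⌊A⌋₊ + 1 : ℕ) : ℝ) ≤ 3*A := by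
      push_cast
      have := Nat.floor_le hA0
      linarith
    calc (Set.ncard (LSet A) : ℝ) ≤ (((2 * ⌊A⌋₊ + 1)^4 : ℕ) : ℝ) := by exact_mod_cast h1
      _ = (((2 * ⌊A⌋₊ + 1 : ℕ) : ℝ))^4 := by push_cast; ring
      _ ≤ (3*A)^4 := by
          apply pow_le_pow_left₀ (by positivity) h2
  -- N ≥ A/3
  have hNA : A/3 ≤ (N:ℝ) := by
    have := Nat.sub_one_lt_floor (A/2)
    linarith
  have hTlb : A^4/8100 ≤ (T.card : ℝ) := by
    rw [hTcard]
    have hG2 : (A/3)^2/10 ≤ (N:ℝ)^2/10 := by nlinarith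
    have hGnn : (0:ℝ) ≤ ((Gfin N).card : ℝ) := by positivity
    nlinarith [hG, hG2]
  -- conclude
  have hLpos : (0:ℝ) < (Set.ncard (LSet A) : ℝ) := by
    have h2 : (0:ℝ) < (T.card : ℝ) := by
      have h4 : (0:ℝ) < A^4/8100 := by positivity
      linarith
    have h3 := Set.ncard_le_ncard (LlocSet_subset A) hfinL
    have : (0:ℝ) < (Set.ncard (LlocSet A) : ℝ) := lt_of_lt_of_le h2 hLloc_lb
    exact lt_of_lt_of_le this (by exact_mod_cast h3)
  calc (1:ℝ)/1000000 ≤ (A^4/8100) / ((3*A)^4) := by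
        rw [le_div_iff₀ (by positivity)]
        have h4 : (0:ℝ) < A^4 := by positivity
        nlinarith
    _ ≤ (Set.ncard (LlocSet A) : ℝ) / (Set.ncard (LSet A) : ℝ) :=
        div_le_div₀ (by positivity) (hTlb.trans hLloc_lb) hLpos hL_ub

end Aux2

end Aux

/-- Theorem 1.2: `liminf_{A→∞} #𝕃^loc(A)/#𝕃(A) > 0`. -/
theorem locally_solvable_positive_proportion :
    0 < Filter.liminf
      (fun A : ℝ => (Set.ncard (LlocSet A) : ℝ) / (Set.ncard (LSet A) : ℝ))
      Filter.atTop := by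
  have hle1 : ∀ A : ℝ, (Set.ncard (LlocSet A) : ℝ) / (Set.ncard (LSet A) : ℝ) ≤ 1 := by
    intro A
    have hmono := Set.ncard_le_ncard (LlocSet_subset A) (LSet_finite A)
    rcases eq_or_ne (Set.ncard (LSet A)) 0 with h | h
    · have : Set.ncard (LlocSet A) = 0 := by omega
      simp [this, h]
    · rw [div_le_one (by exact_mod_cast Nat.pos_of_ne_zero h)]
      exact_mod_cast hmono
  have hcob : Filter.IsCoboundedUnder (· ≥ ·) Filter.atTop
      (fun A : ℝ => (Set.ncard (LlocSet A) : ℝ) / (Set.ncard (LSet A) : ℝ)) :=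
    Filter.isCoboundedUnder_ge_of_le Filter.atTop (x := 1) hle1
  refine lt_of_lt_of_le (show (0:ℝ) < 1/1000000 by norm_num)
    (Filter.le_liminf_of_le hcob ?_)
  exact Filter.eventually_atTop.mpr ⟨30000, fun A hA => main_lb A hA⟩
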